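/- Let X and Y be d-dimensional simplicial complexes such that Y is obtained from X by a single bistellar move of index l (0 ≤ l ≤ d). Then for 0 ≤ j ≤ d, g_{j+1}(Y) − g_{j+1}(X) equals +1 if j = l ≠ d/2, equals −1 if j = d−l ≠ d/2, and equals 0 otherwise. -/

import Mathlib

open Finset

/-- An abstract simplicial complex on vertex set `V`, given as a finite, downward closed
family of finite sets containing the empty face. -/
def IsComplex {V : Type*} (X : Finset (Finset V)) : Prop :=
  ∅ ∈ X ∧ ∀ s ∈ X, ∀ t ⊆ s, t ∈ X

/-- `fc X j` is the number of faces of `X` of cardinality `j`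
(so `fc X (i+1)` is the number of `i`-dimensional faces, and `fc X 0 = 1`). -/
def fc {V : Type*} (X : Finset (Finset V)) (j : ℕ) : ℕ :=
  (X.filter fun s => s.card = j).card

/-- The full simplex on the vertex set `σ`. -/
def simplexC {V : Type*} [DecidableEq V] (σ : Finset V) : Finset (Finset V) :=
  σ.powerset

/-- The boundary complex of the simplex on `σ` (all proper subsets of `σ`). -/
def boundaryC {V : Type*} [DecidableEq V] (σ : Finset V) : Finset (Finset V) :=
  σ.powerset.erase σ

/-- The join of two families of faces (on disjoint vertex sets). -/
def joinC {V : Type*} [DecidableEq V] (A B : Finset (Finset V)) : Finset (Finset V) :=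
  (A ×ˢ B).image fun p => p.1 ∪ p.2

/-- The induced subcomplex of `X` on the vertex set `W`. -/
def inducedC {V : Type*} [DecidableEq V] (X : Finset (Finset V)) (W : Finset V) :
    Finset (Finset V) :=
  X.filter fun s => s ⊆ W

/-- The vertex set of a complex. -/
def vertexSet {V : Type*} [DecidableEq V] (X : Finset (Finset V)) : Finset V :=
  X.sup id

/-- The link of a vertex `x` in `X`. -/
def linkC {V : Type*} [DecidableEq V] (X : Finset (Finset V)) (x : V) :
    Finset (Finset V) :=
  X.filter fun s => x ∉ s ∧ insert x s ∈ X

/-- `X` is pure of dimension `d`: every face has dimension at most `d` and is contained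
in a face of dimension exactly `d`. -/
def PureDim {V : Type*} (X : Finset (Finset V)) (d : ℕ) : Prop :=
  (∀ s ∈ X, s.card ≤ d + 1) ∧ ∀ s ∈ X, ∃ F ∈ X, s ⊆ F ∧ F.card = d + 1

/-- `Y` is obtained from `X` by the bistellar move `α ↦ β`: the induced subcomplex of `X`
on `α ⊔ β` is `α̅ * ∂β`, and `Y` is obtained by replacing it with `∂α * β̅`. -/
def BistellarMove {V : Type*} [DecidableEq V] (X Y : Finset (Finset V))
    (α β : Finset V) : Prop :=
  α.Nonempty ∧ β.Nonempty ∧ Disjoint α β ∧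
  inducedC X (α ∪ β) = joinC (simplexC α) (boundaryC β) ∧
  Y = (X \ joinC (simplexC α) (boundaryC β)) ∪ joinC (boundaryC α) (simplexC β)

/-- The `g`-vector of a `d`-dimensional complex:
`g_j(X) = ∑_{i=−1}^{j−1} (−1)^{j−i−1} C(d−i+1, j−i−1) f_i(X)` (here `k = i + 1`). -/
def gvec {V : Type*} (d : ℕ) (X : Finset (Finset V)) (j : ℕ) : ℤ :=
  ∑ k ∈ Finset.range (j + 1),
    (-1 : ℤ) ^ (j - k) * ((d + 2 - k).choose (j - k)) * (fc X k : ℤ)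

/-- Change of the `g`-vector under a bistellar move of index `l` on `d`-dimensional
complexes: `g_{j+1}(Y) − g_{j+1}(X)` is `+1` if `j = l ≠ d/2`, `−1` if `j = d−l ≠ d/2`,
and `0` otherwise. -/

lemma choose_mul' (n r m : ℕ) (h : m ≤ r) :
    n.choose r * r.choose m = n.choose m * (n - m).choose (r - m) := by
  rcases le_or_gt r n with hrn | hrn
  · exact Nat.choose_mul (n := n) h
  · rw [Nat.choose_eq_zero_of_lt hrn]
    rcases le_or_gt m n with hmn | hmn
    · rw [Nat.choose_eq_zero_of_lt (show n - m < r - m by omega), Nat.mul_zero, Nat.zero_mul]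
    · rw [Nat.choose_eq_zero_of_lt hmn]; simp

lemma key_sum (n r : ℕ) :
    (∑ m ∈ Finset.range (r + 1),
      (-1 : ℤ) ^ (r - m) * ((n - m).choose (r - m) : ℤ) * (n.choose m : ℤ))
    = if r = 0 then 1 else 0 := by
  have h1 : ∀ m ∈ Finset.range (r + 1),
      (-1 : ℤ) ^ (r - m) * ((n - m).choose (r - m) : ℤ) * (n.choose m : ℤ)
      = ((n.choose r : ℤ) * (-1) ^ r) * ((-1) ^ m * (r.choose m : ℤ)) := by
    intro m hm
    rw [Finset.mem_range] at hm
    have hmr : m ≤ r := by omega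
    have hc : ((n.choose m : ℤ) * ((n - m).choose (r - m) : ℤ))
        = (n.choose r : ℤ) * (r.choose m : ℤ) := by
      exact_mod_cast congrArg (Nat.cast : ℕ → ℤ) (choose_mul' n r m hmr).symm
    have hsign : (-1 : ℤ) ^ (r - m) = (-1) ^ r * (-1) ^ m := by
      have h2 : ((-1 : ℤ)) ^ (r + m) = (-1) ^ (r - m) := by
        rw [show r + m = (r - m) + 2 * m by omega, pow_add, pow_mul]; simp
      rw [← h2, pow_add]
    rw [hsign]
    linear_combination ((-1 : ℤ) ^ r * (-1) ^ m) * hc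
  rw [Finset.sum_congr rfl h1, ← Finset.mul_sum, Int.alternating_sum_range_choose]
  by_cases hr : r = 0 <;> simp [hr]

lemma main_sum (d j a b : ℕ) (hb1 : 1 ≤ b) (hab : a + b = d + 2) :
    (∑ k ∈ Finset.range (j + 2),
      (-1 : ℤ) ^ (j + 1 - k) * ((d + 2 - k).choose (j + 1 - k) : ℤ) *
        (if b ≤ k then (a.choose (k - b) : ℤ) else 0))
    = if j + 1 = b then 1 else 0 := by
  by_cases hbj : b ≤ j + 1
  · rw [Finset.range_eq_Ico,
      ← Finset.sum_Ico_consecutive _ (Nat.zero_le b) (show b ≤ j + 2 by omega)]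
    have h0 : (∑ k ∈ Finset.Ico 0 b,
        (-1 : ℤ) ^ (j + 1 - k) * ((d + 2 - k).choose (j + 1 - k) : ℤ) *
          (if b ≤ k then (a.choose (k - b) : ℤ) else 0)) = 0 := by
      apply Finset.sum_eq_zero
      intro k hk
      rw [Finset.mem_Ico] at hk
      rw [if_neg (by omega)]; ring
    rw [h0, zero_add, Finset.sum_Ico_eq_sum_range]
    have hr : j + 2 - b = (j + 1 - b) + 1 := by omega
    rw [hr]
    have hcongr : ∀ m ∈ Finset.range ((j + 1 - b) + 1),
        (-1 : ℤ) ^ (j + 1 - (b + m)) * ((d + 2 - (b + m)).choose (j + 1 - (b + m)) : ℤ) *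
          (if b ≤ b + m then (a.choose (b + m - b) : ℤ) else 0)
        = (-1 : ℤ) ^ ((j + 1 - b) - m) * ((a - m).choose ((j + 1 - b) - m) : ℤ)
            * (a.choose m : ℤ) := by
      intro m hm
      rw [if_pos (by omega : b ≤ b + m),
        show j + 1 - (b + m) = (j + 1 - b) - m by omega,
        show d + 2 - (b + m) = a - m by omega,
        show b + m - b = m by omega]
    rw [Finset.sum_congr rfl hcongr, key_sum a (j + 1 - b)]
    have : (j + 1 - b = 0) ↔ (j + 1 = b) := by omega
    simp [this]
  · rw [if_neg (by omega)]
    apply Finset.sum_eq_zero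
    intro k hk
    rw [Finset.mem_range] at hk
    rw [if_neg (by omega)]; ring

lemma joinC_comm {V : Type*} [DecidableEq V] (A B : Finset (Finset V)) :
    joinC A B = joinC B A := by
  ext S
  simp only [joinC, Finset.mem_image, Finset.mem_product, Prod.exists]
  constructor <;> rintro ⟨F, G, ⟨hF, hG⟩, rfl⟩ <;>
    exact ⟨G, F, ⟨hG, hF⟩, Finset.union_comm _ _⟩

lemma join_simplex_boundary {V : Type*} [DecidableEq V] (α β : Finset V)
    (hd : Disjoint α β) :
    joinC (simplexC α) (boundaryC β) = (α ∪ β).powerset.filter fun S => ¬ β ⊆ S := by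
  ext S
  simp only [joinC, simplexC, boundaryC, Finset.mem_image, Finset.mem_product,
    Finset.mem_filter, Finset.mem_powerset, Finset.mem_erase, Prod.exists]
  constructor
  · rintro ⟨F, G, ⟨hF, hGne, hG⟩, rfl⟩
    refine ⟨Finset.union_subset_union hF hG, fun hβ => hGne ?_⟩
    apply Finset.Subset.antisymm hG
    intro x hx
    rcases Finset.mem_union.1 (hβ hx) with h' | h'
    · exact absurd hx (Finset.disjoint_left.1 hd (hF h'))
    · exact h'
  · rintro ⟨hSub, hnβ⟩
    refine ⟨S ∩ α, S ∩ β, ⟨Finset.inter_subset_right, ?_, Finset.inter_subset_right⟩, ?_⟩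
    · intro h
      exact hnβ (h ▸ Finset.inter_subset_left)
    · rw [← Finset.inter_union_distrib_left, Finset.inter_eq_left.2 hSub]

lemma count_contain {V : Type*} [DecidableEq V] (α β : Finset V) (hd : Disjoint α β)
    (k : ℕ) :
    (((α ∪ β).powerset.filter fun S => S.card = k ∧ β ⊆ S)).card
    = if β.card ≤ k then α.card.choose (k - β.card) else 0 := by
  split_ifs with h
  · rw [← Finset.card_powersetCard (k - β.card) α]
    apply Finset.card_bij (fun S _ => S \ β)
    · intro S hS
      simp only [Finset.mem_filter, Finset.mem_powerset] at hS
      obtain ⟨hSub, hcard, hβS⟩ := hS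
      rw [Finset.mem_powersetCard]
      constructor
      · intro x hx
        rw [Finset.mem_sdiff] at hx
        rcases Finset.mem_union.1 (hSub hx.1) with h' | h'
        · exact h'
        · exact absurd h' hx.2
      · rw [Finset.card_sdiff_of_subset hβS, hcard]
    · intro S hS T hT hST
      simp only [Finset.mem_filter, Finset.mem_powerset] at hS hT
      have h2 : S \ β ∪ β = T \ β ∪ β := by rw [hST]
      rwa [Finset.sdiff_union_of_subset hS.2.2, Finset.sdiff_union_of_subset hT.2.2] at h2
    · intro T hT
      rw [Finset.mem_powersetCard] at hT
      have hdT : Disjoint T β := hd.mono_left hT.1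
      refine ⟨T ∪ β, ?_, ?_⟩
      · simp only [Finset.mem_filter, Finset.mem_powerset]
        refine ⟨Finset.union_subset_union hT.1 Finset.Subset.rfl, ?_,
          Finset.subset_union_right⟩
        rw [Finset.card_union_of_disjoint hdT, hT.2]
        omega
      · rw [Finset.union_sdiff_right, Finset.sdiff_eq_self_of_disjoint hdT]
  · rw [Finset.card_eq_zero, Finset.filter_eq_empty_iff]
    intro S _
    rintro ⟨hcard, hβS⟩
    exact h (hcard ▸ Finset.card_le_card hβS)

theorem gvector_of_bistellarMove {V : Type*} [DecidableEq V]
    (X Y : Finset (Finset V)) (d l : ℕ)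
    (hX : IsComplex X) (hY : IsComplex Y)
    (hXd : ∀ s ∈ X, s.card ≤ d + 1) (hYd : ∀ s ∈ Y, s.card ≤ d + 1)
    (α β : Finset V) (hl : l ≤ d) (hβ : β.card = l + 1) (hα : α.card = d + 1 - l)
    (hmove : BistellarMove X Y α β) (j : ℕ) (hj : j ≤ d) :
    gvec d Y (j + 1) - gvec d X (j + 1) =
      if j = l ∧ 2 * j ≠ d then 1
      else if j = d - l ∧ 2 * j ≠ d then -1
      else 0 := by
  obtain ⟨hαne, hβne, hdis, hind, hYeq⟩ := hmove
  have hJ1 : joinC (simplexC α) (boundaryC β)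
      = (α ∪ β).powerset.filter fun S => ¬ β ⊆ S := join_simplex_boundary α β hdis
  have hJ2 : joinC (boundaryC α) (simplexC β)
      = (α ∪ β).powerset.filter fun S => ¬ α ⊆ S := by
    rw [joinC_comm, join_simplex_boundary β α hdis.symm, Finset.union_comm β α]
  have hsub1 : joinC (simplexC α) (boundaryC β) ⊆ X := by
    rw [← hind]; exact Finset.filter_subset _ _
  have hdisj : Disjoint (X \ joinC (simplexC α) (boundaryC β))
      (joinC (boundaryC α) (simplexC β)) := by
    rw [Finset.disjoint_left]
    intro s hs hs2
    rw [Finset.mem_sdiff] at hs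
    have hsP : s ⊆ α ∪ β := by
      rw [hJ2] at hs2
      exact Finset.mem_powerset.1 (Finset.mem_filter.1 hs2).1
    apply hs.2
    rw [← hind]
    exact Finset.mem_filter.2 ⟨hs.1, hsP⟩
  -- face count difference
  have key : ∀ k, (fc Y k : ℤ) - (fc X k : ℤ) =
      (((α ∪ β).powerset.filter fun S => S.card = k ∧ β ⊆ S).card : ℤ)
      - (((α ∪ β).powerset.filter fun S => S.card = k ∧ α ⊆ S).card : ℤ) := by
    intro k
    have h1 : fc Y k + fc (joinC (simplexC α) (boundaryC β)) k
        = fc X k + fc (joinC (boundaryC α) (simplexC β)) k := by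
      unfold fc
      rw [hYeq, Finset.filter_union,
        Finset.card_union_of_disjoint (Finset.disjoint_filter_filter hdisj)]
      have hsd : (X \ joinC (simplexC α) (boundaryC β)).filter (fun s => s.card = k)
          = (X.filter fun s => s.card = k)
            \ ((joinC (simplexC α) (boundaryC β)).filter fun s => s.card = k) := by
        ext s
        simp only [Finset.mem_sdiff, Finset.mem_filter]
        tauto
      rw [hsd, Finset.card_sdiff_of_subset (Finset.filter_subset_filter _ hsub1)]
      have hle : ((joinC (simplexC α) (boundaryC β)).filter fun s => s.card = k).card
          ≤ (X.filter fun s => s.card = k).card :=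
        Finset.card_le_card (Finset.filter_subset_filter _ hsub1)
      omega
    have h2a : fc (joinC (simplexC α) (boundaryC β)) k
          + ((α ∪ β).powerset.filter fun S => S.card = k ∧ β ⊆ S).card
        = (((α ∪ β).powerset.filter fun S => S.card = k).card) := by
      have e1 : (joinC (simplexC α) (boundaryC β)).filter (fun s => s.card = k)
          = ((α ∪ β).powerset.filter fun S => S.card = k).filter fun S => ¬ β ⊆ S := by
        rw [hJ1, Finset.filter_filter, Finset.filter_filter]
        exact Finset.filter_congr fun S _ => by tauto
      have e2 : ((α ∪ β).powerset.filter fun S => S.card = k ∧ β ⊆ S)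
          = ((α ∪ β).powerset.filter fun S => S.card = k).filter fun S => β ⊆ S := by
        rw [Finset.filter_filter]
      unfold fc
      rw [e1, e2]
      rw [Nat.add_comm]
      exact Finset.card_filter_add_card_filter_not _
    have h2b : fc (joinC (boundaryC α) (simplexC β)) k
          + ((α ∪ β).powerset.filter fun S => S.card = k ∧ α ⊆ S).card
        = (((α ∪ β).powerset.filter fun S => S.card = k).card) := by
      have e1 : (joinC (boundaryC α) (simplexC β)).filter (fun s => s.card = k)
          = ((α ∪ β).powerset.filter fun S => S.card = k).filter fun S => ¬ α ⊆ S := by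
        rw [hJ2, Finset.filter_filter, Finset.filter_filter]
        exact Finset.filter_congr fun S _ => by tauto
      have e2 : ((α ∪ β).powerset.filter fun S => S.card = k ∧ α ⊆ S)
          = ((α ∪ β).powerset.filter fun S => S.card = k).filter fun S => α ⊆ S := by
        rw [Finset.filter_filter]
      unfold fc
      rw [e1, e2]
      rw [Nat.add_comm]
      exact Finset.card_filter_add_card_filter_not _
    omega
  -- rewrite counts via binomials
  have hA : ∀ k, (((α ∪ β).powerset.filter fun S => S.card = k ∧ β ⊆ S).card : ℤ)
      = if l + 1 ≤ k then ((d + 1 - l).choose (k - (l + 1)) : ℤ) else 0 := by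
    intro k
    rw [count_contain α β hdis k, hβ, hα]
    split_ifs <;> simp
  have hB : ∀ k, (((α ∪ β).powerset.filter fun S => S.card = k ∧ α ⊆ S).card : ℤ)
      = if d + 1 - l ≤ k then ((l + 1).choose (k - (d + 1 - l)) : ℤ) else 0 := by
    intro k
    rw [Finset.union_comm α β, count_contain β α hdis.symm k, hβ, hα]
    split_ifs <;> simp
  have hgdiff : gvec d Y (j + 1) - gvec d X (j + 1)
      = ∑ k ∈ Finset.range (j + 2),
          (-1 : ℤ) ^ (j + 1 - k) * ((d + 2 - k).choose (j + 1 - k) : ℤ) *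
            ((fc Y k : ℤ) - (fc X k : ℤ)) := by
    unfold gvec
    rw [← Finset.sum_sub_distrib]
    exact Finset.sum_congr rfl fun k _ => by ring
  rw [hgdiff]
  have hsplit : ∀ k ∈ Finset.range (j + 2),
      (-1 : ℤ) ^ (j + 1 - k) * ((d + 2 - k).choose (j + 1 - k) : ℤ) *
        ((fc Y k : ℤ) - (fc X k : ℤ))
      = (-1 : ℤ) ^ (j + 1 - k) * ((d + 2 - k).choose (j + 1 - k) : ℤ) *
          (if l + 1 ≤ k then ((d + 1 - l).choose (k - (l + 1)) : ℤ) else 0)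
        - (-1 : ℤ) ^ (j + 1 - k) * ((d + 2 - k).choose (j + 1 - k) : ℤ) *
          (if d + 1 - l ≤ k then ((l + 1).choose (k - (d + 1 - l)) : ℤ) else 0) := by
    intro k _
    rw [key k, hA k, hB k]
    ring
  rw [Finset.sum_congr rfl hsplit, Finset.sum_sub_distrib,
    main_sum d j (d + 1 - l) (l + 1) (by omega) (by omega),
    main_sum d j (l + 1) (d + 1 - l) (by omega) (by omega)]
  split_ifs <;> omega
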